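/- Let T ⊆ [3k] × 𝒞 be a partial schedule, C ∈ 𝒞, and ν, ξ : 𝒞 → ℕ profiles with supp(ν) ⊆ {C}, supp(ξ) ⊆ {C}, and |T| + ‖ν‖ + ‖ξ‖ ≤ k/2. Then Σ_{A ∈ ℱ(T,ν)} Σ_{B ∈ ℱ(T,ξ)} Ẽ_T(A ∪ B) = (Σ_{A ∈ ℱ(T,ν)} Ẽ_T(A)) · (Σ_{B ∈ ℱ(T,ξ)} Ẽ_T(B)), where Ẽ_T(A ∪ B) = 0 whenever A ∪ B is not a partial schedule. -/

import Mathlib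

noncomputable section
open scoped Classical

/-- `S` is a partial schedule: every machine occurs in at most one pair of `S`. -/
def IsPartialSchedule {m : ℕ} {C : Type*} (S : Finset (Fin m × C)) : Prop :=
  ∀ p ∈ S, ∀ q ∈ S, p.1 = q.1 → p = q

/-- `δ_S(c)`: the number of machines that `S` connects to configuration `c`. -/
def deltaS {m : ℕ} {C : Type*} [DecidableEq C] (S : Finset (Fin m × C)) (c : C) : ℕ :=
  (S.filter fun e => e.2 = c).card

/-- The machine set `ℳ(S)` of `S`. -/
def machSet {m : ℕ} {C : Type*} (S : Finset (Fin m × C)) : Finset (Fin m) :=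
  S.image Prod.fst

/-- Falling factorial `(x)_b = x(x−1)⋯(x−b+1)`, with `(x)_0 = 1`. -/
def ffall : ℝ → ℕ → ℝ
  | _, 0 => 1
  | x, n + 1 => x * ffall (x - 1) n

/-- The conditional pseudoexpectation value
`Ẽ_T(S) = (1/(3k − |T|)_{|S|}) · ∏_{j=1}^{6} (k/2 − δ_T(C_j))_{δ_S(C_j)}`
if `S` is a partial schedule, and `0` otherwise. -/
def pexp (k : ℕ) (T S : Finset (Fin (3 * k) × Fin 6)) : ℝ :=
  if IsPartialSchedule S then
    (ffall ((3 * k : ℝ) - T.card) S.card)⁻¹ *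
      ∏ j : Fin 6, ffall ((k : ℝ) / 2 - deltaS T j) (deltaS S j)
  else 0

/-- A profile `γ : 𝒞 → ℕ` has norm `‖γ‖ = Σ_C γ(C)`. -/
def pnorm (γ : Fin 6 → ℕ) : ℕ := ∑ c : Fin 6, γ c

/-- `ℱ(T,γ)`: partial schedules `A` with `ℳ(A) ⊆ [m] ∖ ℳ(T)` in `γ`-profile. -/
def extFam (k : ℕ) (T : Finset (Fin (3 * k) × Fin 6)) (γ : Fin 6 → ℕ) :
    Finset (Finset (Fin (3 * k) × Fin 6)) :=
  Finset.univ.filter fun A =>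
    IsPartialSchedule A ∧ Disjoint (machSet A) (machSet T) ∧ ∀ c, deltaS A c = γ c

section Aux
open Finset

lemma ffall_zero' (x : ℝ) : ffall x 0 = 1 := rfl
lemma ffall_succ' (x : ℝ) (n : ℕ) : ffall x (n+1) = x * ffall (x-1) n := rfl

lemma ffall_succ_right (n : ℕ) : ∀ x : ℝ, ffall x (n+1) = ffall x n * (x - n) := by
  induction n with
  | zero => intro x; simp [ffall]
  | succ n ih =>
    intro x
    rw [ffall_succ', ih (x-1), ffall_succ']
    push_cast
    ring

lemma ffall_add (a : ℕ) : ∀ (b : ℕ) (x : ℝ), ffall x (a + b) = ffall x a * ffall (x - a) b := by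
  intro b
  induction b with
  | zero => intro x; simp [ffall]
  | succ b ih =>
    intro x
    rw [← Nat.add_assoc, ffall_succ_right, ih, ffall_succ_right, mul_assoc]
    push_cast
    ring_nf

lemma ffall_natCast : ∀ (r n : ℕ), ffall (n : ℝ) r = (n.descFactorial r : ℝ) := by
  intro r
  induction r with
  | zero => intro n; simp [ffall]
  | succ r ih =>
    intro n
    cases n with
    | zero => rw [ffall_succ']; simp [Nat.zero_descFactorial_succ]
    | succ n =>
      rw [ffall_succ', Nat.succ_descFactorial_succ]
      push_cast
      rw [show ((n:ℝ) + 1 - 1) = (n:ℝ) by ring, ih n]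

lemma ffall_nat_pos {r n : ℕ} (h : r ≤ n) : 0 < ffall (n : ℝ) r := by
  rw [ffall_natCast]
  have : n.descFactorial r ≠ 0 := by
    intro h0
    exact absurd (Nat.descFactorial_eq_zero_iff_lt.mp h0) (not_lt.mpr h)
  positivity

lemma ffall_vandermonde : ∀ (b : ℕ) (y z : ℝ),
    ffall (y + z) b = ∑ r ∈ Finset.range (b+1), (b.choose r : ℝ) * ffall y r * ffall z (b - r) := by
  intro b
  induction b with
  | zero => intro y z; simp [ffall]
  | succ b ih =>
    intro y z
    have key : ffall (y + z) (b+1)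
        = ∑ r ∈ Finset.range (b+1), (b.choose r : ℝ) *
            (ffall y (r+1) * ffall z (b - r) + ffall y r * ffall z (b - r + 1)) := by
      rw [ffall_succ_right, ih, Finset.sum_mul]
      refine Finset.sum_congr rfl ?_
      intro r hr
      have hrb : r ≤ b := Nat.lt_succ_iff.mp (Finset.mem_range.mp hr)
      have hcast : ((b - r : ℕ) : ℝ) = (b : ℝ) - r := by
        rw [Nat.cast_sub hrb]
      rw [ffall_succ_right, ffall_succ_right, hcast]
      ring
    rw [key]
    simp only [mul_add]
    rw [Finset.sum_add_distrib]
    have h2 : ∑ r ∈ Finset.range (b+1), (b.choose r : ℝ) * (ffall y r * ffall z (b - r + 1))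
        = ∑ r ∈ Finset.range (b+1), (b.choose r : ℝ) * ffall y r * ffall z (b + 1 - r) := by
      refine Finset.sum_congr rfl ?_
      intro r hr
      have hrb : r ≤ b := Nat.lt_succ_iff.mp (Finset.mem_range.mp hr)
      rw [show b - r + 1 = b + 1 - r by omega]
      ring
    rw [h2]
    rw [Finset.sum_range_succ' (fun r => ((b+1).choose r : ℝ) * ffall y r * ffall z (b + 1 - r)) (b+1)]
    have h3 : ∀ r ∈ Finset.range (b+1), ((b+1).choose (r+1) : ℝ) * ffall y (r+1) * ffall z (b + 1 - (r+1))
        = (b.choose r : ℝ) * (ffall y (r+1) * ffall z (b - r))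
          + (b.choose (r+1) : ℝ) * ffall y (r+1) * ffall z (b - r) := by
      intro r hr
      rw [Nat.choose_succ_succ, show b + 1 - (r+1) = b - r by omega]
      push_cast
      ring
    rw [Finset.sum_congr rfl h3, Finset.sum_add_distrib]
    have h4 : ∑ r ∈ Finset.range (b+1), (b.choose (r+1) : ℝ) * ffall y (r+1) * ffall z (b - r)
          + ((b+1).choose 0 : ℝ) * ffall y 0 * ffall z (b + 1 - 0)
        = ∑ r ∈ Finset.range (b+1), (b.choose r : ℝ) * ffall y r * ffall z (b + 1 - r) := by
      rw [Finset.sum_range_succ' (fun r => (b.choose r : ℝ) * ffall y r * ffall z (b + 1 - r)) b]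
      congr 1
      · rw [Finset.sum_range_succ]
        simp only [Nat.choose_succ_self, Nat.cast_zero, zero_mul, add_zero]
        refine Finset.sum_congr rfl ?_
        intro r hr
        rw [show b + 1 - (r+1) = b - r by omega]
      · simp [ffall]
    rw [add_assoc, h4]

lemma aux_sum (a b : ℕ) (y : ℝ) :
    ∑ r ∈ Finset.range (b+1), (a.choose (b-r) : ℝ) * ((r.factorial : ℝ))⁻¹ * ffall y r
      = ((b.factorial : ℝ))⁻¹ * ffall (y + a) b := by
  rw [ffall_vandermonde b y a, Finset.mul_sum]
  refine Finset.sum_congr rfl ?_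
  intro r hr
  have hrb : r ≤ b := Nat.lt_succ_iff.mp (Finset.mem_range.mp hr)
  rw [ffall_natCast (b-r) (a), Nat.descFactorial_eq_factorial_mul_choose,
    ← Nat.choose_mul_factorial_mul_factorial hrb]
  have h1 : (r.factorial : ℝ) ≠ 0 := by positivity
  have h2 : ((b-r).factorial : ℝ) ≠ 0 := by positivity
  have h3 : ((b.choose r : ℕ) : ℝ) ≠ 0 := by exact_mod_cast (Nat.choose_pos hrb).ne'
  push_cast
  field_simp

lemma key_identity (n a b : ℕ) (hab : a + b ≤ n) (x : ℝ) :
    ∑ r ∈ Finset.range (b+1),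
        (((n-a).choose r : ℝ) * (a.choose (b-r) : ℝ)) * ((ffall (n:ℝ) (a+r))⁻¹ * ffall x (a+r))
      = (n.choose b : ℝ) * ((ffall (n:ℝ) a)⁻¹ * ffall x a) * ((ffall (n:ℝ) b)⁻¹ * ffall x b) := by
  have han : a ≤ n := le_trans (Nat.le_add_right a b) hab
  have hbn : b ≤ n := le_trans (Nat.le_add_left b a) hab
  have hna : ((n:ℝ) - a) = ((n - a : ℕ) : ℝ) := by rw [Nat.cast_sub han]
  have hfa : (0:ℝ) < ffall (n:ℝ) a := ffall_nat_pos han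
  have hfb : (0:ℝ) < ffall (n:ℝ) b := ffall_nat_pos hbn
  have hsum : ∀ r ∈ Finset.range (b+1),
      (((n-a).choose r : ℝ) * (a.choose (b-r) : ℝ)) * ((ffall (n:ℝ) (a+r))⁻¹ * ffall x (a+r))
        = ((ffall (n:ℝ) a)⁻¹ * ffall x a) *
            ((a.choose (b-r) : ℝ) * ((r.factorial : ℝ))⁻¹ * ffall (x - a) r) := by
    intro r hr
    have hrb : r ≤ b := Nat.lt_succ_iff.mp (Finset.mem_range.mp hr)
    have hrna : r ≤ n - a := le_trans hrb (Nat.le_sub_of_add_le (by omega))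
    have hchoosepos : (0:ℝ) < ((n-a).choose r : ℝ) := by
      exact_mod_cast Nat.choose_pos hrna
    have hrfac : (0:ℝ) < (r.factorial : ℝ) := by positivity
    rw [ffall_add a r x, ffall_add a r (n:ℝ), hna, ffall_natCast r (n-a),
      Nat.descFactorial_eq_factorial_mul_choose]
    push_cast
    field_simp
  rw [Finset.sum_congr rfl hsum, ← Finset.mul_sum, aux_sum a b (x - (a:ℝ)),
    show (x - (a:ℝ)) + a = x by ring]
  have hcb : ((n.choose b : ℝ)) ≠ 0 := by exact_mod_cast (Nat.choose_pos hbn).ne'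
  have hffb : ffall (n:ℝ) b = (b.factorial : ℝ) * (n.choose b : ℝ) := by
    rw [ffall_natCast b n, Nat.descFactorial_eq_factorial_mul_choose]; push_cast; ring
  rw [hffb]
  have hbfac : (0:ℝ) < (b.factorial : ℝ) := by positivity
  field_simp

/-- Counting fibers by `|u \ s|`. -/
lemma fiber_card {α : Type*} [DecidableEq α] (M s : Finset α) (hs : s ⊆ M) (b r : ℕ) (hr : r ≤ b) :
    ((Finset.powersetCard b M).filter (fun u => (u \ s).card = r)).card
      = (M.card - s.card).choose r * s.card.choose (b - r) := by
  have hcard : ((Finset.powersetCard r (M \ s)) ×ˢ (Finset.powersetCard (b - r) s)).card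
      = (M.card - s.card).choose r * s.card.choose (b - r) := by
    rw [Finset.card_product, Finset.card_powersetCard, Finset.card_powersetCard,
      Finset.card_sdiff_of_subset hs]
  rw [← hcard]
  refine Finset.card_bij' (fun u _ => (u \ s, u ∩ s)) (fun p _ => p.1 ∪ p.2) ?_ ?_ ?_ ?_
  · intro u hu
    rw [Finset.mem_filter, Finset.mem_powersetCard] at hu
    obtain ⟨⟨huM, hub⟩, hur⟩ := hu
    rw [Finset.mem_product, Finset.mem_powersetCard, Finset.mem_powersetCard]
    refine ⟨⟨Finset.sdiff_subset_sdiff huM (le_refl s), hur⟩, Finset.inter_subset_right, ?_⟩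
    show (u ∩ s).card = b - r
    have := Finset.card_inter_add_card_sdiff u s
    omega
  · intro p hp
    rw [Finset.mem_product, Finset.mem_powersetCard, Finset.mem_powersetCard] at hp
    obtain ⟨⟨h1M, h1r⟩, h2s, h2r⟩ := hp
    have hdisj : Disjoint p.1 p.2 := by
      refine Finset.disjoint_left.mpr ?_
      intro x hx1 hx2
      exact (Finset.mem_sdiff.mp (h1M hx1)).2 (h2s hx2)
    have hsdiff : (p.1 ∪ p.2) \ s = p.1 := by
      ext x
      simp only [Finset.mem_sdiff, Finset.mem_union]
      constructor
      · rintro ⟨hx | hx, hxs⟩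
        · exact hx
        · exact absurd (h2s hx) hxs
      · intro hx
        exact ⟨Or.inl hx, (Finset.mem_sdiff.mp (h1M hx)).2⟩
    rw [Finset.mem_filter, Finset.mem_powersetCard]
    refine ⟨⟨?_, ?_⟩, by rw [hsdiff, h1r]⟩
    · exact Finset.union_subset (le_trans h1M Finset.sdiff_subset) (le_trans h2s hs)
    · rw [Finset.card_union_of_disjoint hdisj, h1r, h2r]
      omega
  · intro u hu
    exact Finset.sdiff_union_inter u s
  · intro p hp
    rw [Finset.mem_product, Finset.mem_powersetCard, Finset.mem_powersetCard] at hp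
    obtain ⟨⟨h1M, h1r⟩, h2s, h2r⟩ := hp
    have hsdiff : (p.1 ∪ p.2) \ s = p.1 := by
      ext x
      simp only [Finset.mem_sdiff, Finset.mem_union]
      constructor
      · rintro ⟨hx | hx, hxs⟩
        · exact hx
        · exact absurd (h2s hx) hxs
      · intro hx
        exact ⟨Or.inl hx, (Finset.mem_sdiff.mp (h1M hx)).2⟩
    have hinter : (p.1 ∪ p.2) ∩ s = p.2 := by
      ext x
      simp only [Finset.mem_inter, Finset.mem_union]
      constructor
      · rintro ⟨hx | hx, hxs⟩
        · exact absurd hxs (Finset.mem_sdiff.mp (h1M hx)).2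
        · exact hx
      · intro hx
        exact ⟨Or.inr hx, h2s hx⟩
    rw [Prod.ext_iff]
    exact ⟨hsdiff, hinter⟩

/-- Decomposing a sum over `b`-subsets by `|u \ s|`. -/
lemma sum_powersetCard_union {α : Type*} [DecidableEq α] (M s : Finset α) (hs : s ⊆ M)
    (a b : ℕ) (hsa : s.card = a) (G : ℕ → ℝ) :
    ∑ u ∈ Finset.powersetCard b M, G ((s ∪ u).card)
      = ∑ r ∈ Finset.range (b+1),
          (((M.card - a).choose r : ℝ) * (a.choose (b-r) : ℝ)) * G (a + r) := by
  have hmain : ∑ u ∈ Finset.powersetCard b M, G ((s ∪ u).card)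
      = ∑ u ∈ Finset.powersetCard b M, G (a + (u \ s).card) := by
    refine Finset.sum_congr rfl ?_
    intro u hu
    congr 1
    have h1 : s ∪ (u \ s) = s ∪ u := Finset.union_sdiff_self_eq_union
    rw [← h1, Finset.card_union_of_disjoint Finset.disjoint_sdiff, hsa]
  rw [hmain]
  have hmaps : ∀ u ∈ Finset.powersetCard b M, (u \ s).card ∈ Finset.range (b+1) := by
    intro u hu
    rw [Finset.mem_powersetCard] at hu
    rw [Finset.mem_range]
    have := Finset.card_le_card (Finset.sdiff_subset (s := u) (t := s))
    omega
  rw [← Finset.sum_fiberwise_of_maps_to hmaps (fun u => G (a + (u \ s).card))]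
  refine Finset.sum_congr rfl ?_
  intro r hr
  have hrb : r ≤ b := Nat.lt_succ_iff.mp (Finset.mem_range.mp hr)
  have hconst : ∀ u ∈ (Finset.powersetCard b M).filter (fun u => (u \ s).card = r),
      G (a + (u \ s).card) = G (a + r) := by
    intro u hu
    rw [(Finset.mem_filter.mp hu).2]
  rw [Finset.sum_congr rfl hconst, Finset.sum_const, fiber_card M s hs b r hrb, hsa]
  push_cast
  ring

end Aux

section Aux2
open Finset

lemma phi_injective {k : ℕ} (c : Fin 6) :
    Function.Injective (fun i : Fin (3*k) => (i, c)) := by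
  intro i j h
  simpa using h

lemma phi_partial {k : ℕ} (c : Fin 6) (s : Finset (Fin (3*k))) :
    IsPartialSchedule (s.image (fun i => (i, c))) := by
  intro p hp q hq hpq
  simp only [Finset.mem_image] at hp hq
  obtain ⟨i, _, rfl⟩ := hp
  obtain ⟨j, _, rfl⟩ := hq
  have hij : i = j := hpq
  subst hij
  rfl

lemma phi_card {k : ℕ} (c : Fin 6) (s : Finset (Fin (3*k))) :
    (s.image (fun i => (i, c))).card = s.card :=
  Finset.card_image_of_injective s (phi_injective c)

lemma machSet_phi {k : ℕ} (c : Fin 6) (s : Finset (Fin (3*k))) :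
    machSet (s.image (fun i => (i, c))) = s := by
  ext i
  simp [machSet]

lemma deltaS_phi_self {k : ℕ} (c : Fin 6) (s : Finset (Fin (3*k))) :
    deltaS (s.image (fun i => (i, c))) c = s.card := by
  rw [deltaS, Finset.filter_true_of_mem, phi_card]
  intro p hp
  simp only [Finset.mem_image] at hp
  obtain ⟨i, _, rfl⟩ := hp
  rfl

lemma deltaS_phi_ne {k : ℕ} {c c' : Fin 6} (h : c' ≠ c) (s : Finset (Fin (3*k))) :
    deltaS (s.image (fun i => (i, c))) c' = 0 := by
  rw [deltaS, Finset.filter_false_of_mem, Finset.card_empty]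
  intro p hp
  simp only [Finset.mem_image] at hp
  obtain ⟨i, _, rfl⟩ := hp
  exact fun hc => h hc.symm

lemma extFam_eq (k : ℕ) (T : Finset (Fin (3*k) × Fin 6)) (c : Fin 6) (γ : Fin 6 → ℕ)
    (hγ : ∀ c' : Fin 6, 0 < γ c' → c' = c) :
    extFam k T γ = (Finset.powersetCard (γ c) (Finset.univ \ machSet T)).image
      (fun s => s.image (fun i => (i, c))) := by
  ext A
  simp only [extFam, Finset.mem_filter, Finset.mem_univ, true_and, Finset.mem_image,
    Finset.mem_powersetCard]
  constructor
  · rintro ⟨hPS, hdis, hδ⟩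
    have hsnd : ∀ p ∈ A, p.2 = c := by
      intro p hp
      by_contra hne
      have hpos : 0 < deltaS A p.2 := by
        rw [deltaS]
        exact Finset.card_pos.mpr ⟨p, Finset.mem_filter.mpr ⟨hp, rfl⟩⟩
      rw [hδ] at hpos
      exact hne (hγ p.2 hpos)
    have hAeq : ((A.image Prod.fst).image (fun i => (i, c))) = A := by
      ext p
      simp only [Finset.mem_image]
      constructor
      · rintro ⟨i, ⟨q, hq, rfl⟩, rfl⟩
        have : q = (q.1, c) := by
          rw [← hsnd q hq]
        rwa [← this]
      · intro hp
        exact ⟨p.1, ⟨p, hp, rfl⟩, by rw [← hsnd p hp]⟩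
    refine ⟨A.image Prod.fst, ⟨?_, ?_⟩, hAeq⟩
    · intro i hi
      rw [Finset.mem_sdiff]
      exact ⟨Finset.mem_univ i, fun hiT => Finset.disjoint_left.mp hdis hi hiT⟩
    · rw [Finset.card_image_of_injOn (fun p hp q hq h => hPS p hp q hq h)]
      have : A.filter (fun e => e.2 = c) = A := Finset.filter_true_of_mem hsnd
      rw [← hδ c, deltaS, this]
  · rintro ⟨s, ⟨hsM, hsc⟩, rfl⟩
    refine ⟨phi_partial c s, ?_, ?_⟩
    · rw [machSet_phi]
      refine Finset.disjoint_left.mpr ?_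
      intro i hi hiT
      exact (Finset.mem_sdiff.mp (hsM hi)).2 hiT
    · intro c'
      by_cases hc : c' = c
      · subst hc
        rw [deltaS_phi_self, hsc]
      · rw [deltaS_phi_ne hc]
        exact (Nat.eq_zero_of_not_pos fun hp => hc (hγ c' hp)).symm

end Aux2


/-- Pseudoindependence for profiles supported on a single common configuration `C`: for a
partial schedule `T`, `C ∈ 𝒞`, and profiles `ν, ξ` with `supp(ν) ⊆ {C}`, `supp(ξ) ⊆ {C}` and
`|T| + ‖ν‖ + ‖ξ‖ ≤ k/2`,
`Σ_{A ∈ ℱ(T,ν)} Σ_{B ∈ ℱ(T,ξ)} Ẽ_T(A ∪ B) = (Σ_{A} Ẽ_T(A)) · (Σ_{B} Ẽ_T(B))`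
(where `Ẽ_T(A ∪ B) = 0` whenever `A ∪ B` is not a partial schedule). -/
theorem pexp_pseudoindependence_single_support (k : ℕ) (hk : Odd k) (hkpos : 0 < k)
    (T : Finset (Fin (3 * k) × Fin 6)) (hT : IsPartialSchedule T)
    (c : Fin 6) (ν ξ : Fin 6 → ℕ)
    (hν : ∀ c' : Fin 6, 0 < ν c' → c' = c)
    (hξ : ∀ c' : Fin 6, 0 < ξ c' → c' = c)
    (hsize : (T.card : ℝ) + (pnorm ν : ℝ) + (pnorm ξ : ℝ) ≤ (k : ℝ) / 2) :
    ∑ A ∈ extFam k T ν, ∑ B ∈ extFam k T ξ, pexp k T (A ∪ B) =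
      (∑ A ∈ extFam k T ν, pexp k T A) * (∑ B ∈ extFam k T ξ, pexp k T B) := by
  classical
  set M : Finset (Fin (3*k)) := Finset.univ \ machSet T with hM
  set x : ℝ := (k:ℝ)/2 - (deltaS T c : ℝ) with hx
  have hmT : (machSet T).card = T.card :=
    Finset.card_image_of_injOn (fun p hp q hq h => hT p hp q hq h)
  have htle : T.card ≤ 3*k := by
    have h1 := Finset.card_le_card (Finset.subset_univ (machSet T))
    simp only [Finset.card_univ, Fintype.card_fin] at h1
    omega
  have hNM : M.card = 3*k - T.card := by
    rw [hM, Finset.card_sdiff_of_subset (Finset.subset_univ _), hmT, Finset.card_univ, Fintype.card_fin]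
  have hpν : pnorm ν = ν c := by
    rw [pnorm]
    refine Finset.sum_eq_single_of_mem c (Finset.mem_univ c) ?_
    intro c' _ hne
    exact Nat.eq_zero_of_not_pos fun hp => hne (hν c' hp)
  have hpξ : pnorm ξ = ξ c := by
    rw [pnorm]
    refine Finset.sum_eq_single_of_mem c (Finset.mem_univ c) ?_
    intro c' _ hne
    exact Nat.eq_zero_of_not_pos fun hp => hne (hξ c' hp)
  have hsz : T.card + ν c + ξ c ≤ k := by
    have hk0 : (0:ℝ) ≤ (k:ℝ) := Nat.cast_nonneg k
    rw [hpν, hpξ] at hsize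
    have hhalf : ((T.card + ν c + ξ c : ℕ) : ℝ) ≤ (k:ℝ) := by
      push_cast
      linarith
    exact_mod_cast hhalf
  have habN : ν c + ξ c ≤ M.card := by omega
  have hcast : (3:ℝ) * (k:ℝ) - (T.card:ℝ) = ((M.card : ℕ) : ℝ) := by
    rw [hNM, Nat.cast_sub htle]
    push_cast
    ring
  set G : ℕ → ℝ := fun r => (ffall ((M.card : ℕ):ℝ) r)⁻¹ * ffall x r with hG
  have hpexp : ∀ w : Finset (Fin (3*k)), pexp k T (w.image (fun i => (i,c))) = G w.card := by
    intro w
    have hprod : ∏ j : Fin 6,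
        ffall ((k : ℝ) / 2 - deltaS T j) (deltaS (w.image (fun i => (i,c))) j)
          = ffall x w.card := by
      have h1 : ∀ j : Fin 6, j ≠ c →
          ffall ((k:ℝ)/2 - deltaS T j) (deltaS (w.image (fun i => (i,c))) j) = 1 := by
        intro j hj
        rw [deltaS_phi_ne hj]
        rfl
      rw [Fintype.prod_eq_single c h1, deltaS_phi_self, hx]
    rw [pexp, if_pos (phi_partial c w), phi_card, hprod, hG]
    have h2 : (3 * (k:ℝ) - (T.card:ℝ)) = ((M.card : ℕ) : ℝ) := hcast
    rw [h2]
  have hφinj : ∀ (X : Finset (Finset (Fin (3*k)))), ∀ s ∈ X, ∀ t ∈ X,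
      (Finset.image (fun i => (i,c)) s) = (Finset.image (fun i => (i,c)) t) → s = t :=
    fun X s _ t _ h => Finset.image_injective (phi_injective c) h
  rw [extFam_eq k T c ν hν, extFam_eq k T c ξ hξ, ← hM]
  rw [Finset.sum_image (hφinj _), Finset.sum_image (hφinj _), Finset.sum_image (hφinj _)]
  have hstep : ∀ s ∈ Finset.powersetCard (ν c) M,
      (∑ B ∈ (Finset.powersetCard (ξ c) M).image (fun s => Finset.image (fun i => (i,c)) s),
          pexp k T ((Finset.image (fun i => (i,c)) s) ∪ B))
        = ((M.card.choose (ξ c) : ℝ)) * G (ν c) * G (ξ c) := by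
    intro s hs
    rw [Finset.mem_powersetCard] at hs
    rw [Finset.sum_image (hφinj _)]
    have hstep2 : ∀ u ∈ Finset.powersetCard (ξ c) M,
        pexp k T ((Finset.image (fun i => (i,c)) s) ∪ (Finset.image (fun i => (i,c)) u))
          = G ((s ∪ u).card) := by
      intro u _
      rw [← Finset.image_union, hpexp]
    rw [Finset.sum_congr rfl hstep2,
      sum_powersetCard_union M s hs.1 (ν c) (ξ c) hs.2 G]
    have hkey := key_identity M.card (ν c) (ξ c) habN x
    simp only [hG]
    exact hkey
  rw [Finset.sum_congr rfl hstep, Finset.sum_const, Finset.card_powersetCard]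
  have hsum1 : ∀ s ∈ Finset.powersetCard (ν c) M,
      pexp k T (Finset.image (fun i => (i,c)) s) = G (ν c) := by
    intro s hs
    rw [hpexp, (Finset.mem_powersetCard.mp hs).2]
  have hsum2 : ∀ s ∈ Finset.powersetCard (ξ c) M,
      pexp k T (Finset.image (fun i => (i,c)) s) = G (ξ c) := by
    intro s hs
    rw [hpexp, (Finset.mem_powersetCard.mp hs).2]
  rw [Finset.sum_congr rfl hsum1, Finset.sum_congr rfl hsum2,
    Finset.sum_const, Finset.sum_const, Finset.card_powersetCard, Finset.card_powersetCard,
    nsmul_eq_mul, nsmul_eq_mul, nsmul_eq_mul]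
  ring
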